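/- Let the n individuals be partitioned into centers I_1,…,I_C with an arbitrary nonnegative m×n valuation matrix A, and fix p ≤ 1 with p ≠ 0. Let b̃ be any pure Nash equilibrium of the Trading Post mechanism with proportional budgets (with respect to centers' GMW_{c,p} objectives) and let ỹ be the induced allocation. Then GMW_p(y^equal) ≤ (1 + max_{c∈[C]} |I_c|/n) · GMW_p(ỹ), where y^equal is the equal-split allocation given by y^equal_{j,i} = 1/n for all j ∈ [m], i ∈ [n]. -/

import Mathlib

open scoped BigOperators

/-- An allocation is feasible if all fractions are nonnegative and each item is
allocated at most once in total. -/
def Feasible {m n : ℕ} (y : Fin m → Fin n → ℝ) : Prop :=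
  (∀ j i, 0 ≤ y j i) ∧ ∀ j, ∑ i, y j i ≤ 1

/-- The (additive) utility of individual `i` under allocation `y`:
`u_i(y) = Σ_j A_{j,i} · y_{j,i}`. -/
noncomputable def util {m n : ℕ} (A : Matrix (Fin m) (Fin n) ℝ)
    (y : Fin m → Fin n → ℝ) (i : Fin n) : ℝ :=
  ∑ j, A j i * y j i

/-- The generalized `p`-mean welfare `GMW_p(y) = ((1/n) Σᵢ uᵢ(y)^p)^{1/p}`
(real powers). -/
noncomputable def GMW {m n : ℕ} (p : ℝ) (A : Matrix (Fin m) (Fin n) ℝ)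
    (y : Fin m → Fin n → ℝ) : ℝ :=
  ((1 / (n : ℝ)) * ∑ i, util A y i ^ p) ^ (1 / p)

open scoped Classical

/-- The set of individuals represented by center `c`. -/
def Ic {n C : ℕ} (ctr : Fin n → Fin C) (c : Fin C) : Finset (Fin n) :=
  Finset.univ.filter fun i => ctr i = c

/-- The Trading Post allocation induced by bids `b`: individual `i` receives the fraction
`b_{j,i} / Σ_{i'} b_{j,i'}` of item `j` (zero if there are no bids on `j`). -/
noncomputable def tpAlloc {m n : ℕ} (b : Fin m → Fin n → ℝ) : Fin m → Fin n → ℝ :=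
  fun j i => if (∑ i', b j i') = 0 then 0 else b j i / ∑ i', b j i'

/-- Bids are valid for the Trading Post mechanism with proportional budgets: nonnegative, and
each center `c` spends at most its budget `|I_c|` in total. -/
def TPValid {m n C : ℕ} (ctr : Fin n → Fin C) (b : Fin m → Fin n → ℝ) : Prop :=
  (∀ j i, 0 ≤ b j i) ∧ ∀ c, ∑ j, ∑ i ∈ Ic ctr c, b j i ≤ ((Ic ctr c).card : ℝ)

/-- `b` is a pure Nash equilibrium of the Trading Post mechanism with proportional budgets,
where center `c` evaluates allocations by `obj c`: no center can strictly improve its objective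
by unilaterally switching to other budget-feasible bids for its own individuals. -/
def TPEquilibrium {m n C : ℕ} (ctr : Fin n → Fin C)
    (obj : Fin C → (Fin m → Fin n → ℝ) → ℝ) (b : Fin m → Fin n → ℝ) : Prop :=
  TPValid ctr b ∧
    ∀ (c : Fin C) (b' : Fin m → Fin n → ℝ), TPValid ctr b' →
      (∀ j i, ctr i ≠ c → b' j i = b j i) →
      obj c (tpAlloc b') ≤ obj c (tpAlloc b)

/-- Center `c`'s objective: the generalized `p`-mean welfare of its own individuals. -/
noncomputable def GMWc {m n C : ℕ} (p : ℝ) (A : Matrix (Fin m) (Fin n) ℝ)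
    (ctr : Fin n → Fin C) (c : Fin C) (y : Fin m → Fin n → ℝ) : ℝ :=
  ((1 / ((Ic ctr c).card : ℝ)) * ∑ i ∈ Ic ctr c, util A y i ^ p) ^ (1 / p)

/-- Monotonicity of the (unnormalized-then-rooted) `p`-mean in the utilities,
for Lean's real `rpow` conventions. -/
lemma pmean_mono {ι : Type*} (s : Finset ι) (k : ℝ) (hk : 0 ≤ k)
    {p : ℝ} (hp : p ≠ 0) (w u : ι → ℝ)
    (hw : ∀ i ∈ s, 0 ≤ w i) (hwu : ∀ i ∈ s, w i ≤ u i)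
    (hz : ∀ i ∈ s, u i = 0 → w i = 0) (hz' : ∀ i ∈ s, w i = 0 → u i = 0) :
    (k * ∑ i ∈ s, w i ^ p) ^ (1/p) ≤ (k * ∑ i ∈ s, u i ^ p) ^ (1/p) := by
  have hu : ∀ i ∈ s, 0 ≤ u i := fun i hi => (hw i hi).trans (hwu i hi)
  rcases lt_or_gt_of_ne hp with hneg | hpos
  · -- p < 0
    have hsum : ∑ i ∈ s, u i ^ p ≤ ∑ i ∈ s, w i ^ p := by
      apply Finset.sum_le_sum
      intro i hi
      rcases eq_or_lt_of_le (hw i hi) with h0 | h0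
      · have hu0 : u i = 0 := hz' i hi h0.symm
        rw [← h0, hu0]
      · exact Real.rpow_le_rpow_of_nonpos h0 (hwu i hi) hneg.le
    have hSu : 0 ≤ k * ∑ i ∈ s, u i ^ p :=
      mul_nonneg hk (Finset.sum_nonneg fun i hi => Real.rpow_nonneg (hu i hi) p)
    rcases eq_or_lt_of_le hSu with hSu0 | hSu0
    · -- k * Σ u^p = 0 : show both sides are 0
      have hSw0 : k * ∑ i ∈ s, w i ^ p = 0 := by
        rcases eq_or_lt_of_le hk with hk0 | hk0
        · rw [← hk0, zero_mul]
        · have : ∑ i ∈ s, u i ^ p = 0 := by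
            have h' := hSu0.symm
            rcases mul_eq_zero.1 h' with h | h
            · exact absurd h (ne_of_gt hk0)
            · exact h
          have hall : ∀ i ∈ s, u i ^ p = 0 :=
            (Finset.sum_eq_zero_iff_of_nonneg
              (fun i hi => Real.rpow_nonneg (hu i hi) p)).1 this
          have : ∑ i ∈ s, w i ^ p = 0 := by
            apply Finset.sum_eq_zero
            intro i hi
            have hui : u i = 0 := (Real.rpow_eq_zero (hu i hi) hp).1 (hall i hi)
            rw [hz i hi hui, Real.zero_rpow hp]
          rw [this, mul_zero]
      rw [hSw0, ← hSu0, Real.zero_rpow (one_div_ne_zero hp)]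
    · exact Real.rpow_le_rpow_of_nonpos hSu0
        (mul_le_mul_of_nonneg_left hsum hk)
        (le_of_lt (div_neg_of_pos_of_neg one_pos hneg))
  · -- p > 0
    have hsum : ∑ i ∈ s, w i ^ p ≤ ∑ i ∈ s, u i ^ p :=
      Finset.sum_le_sum fun i hi => Real.rpow_le_rpow (hw i hi) (hwu i hi) hpos.le
    exact Real.rpow_le_rpow
      (mul_nonneg hk (Finset.sum_nonneg fun i hi => Real.rpow_nonneg (hw i hi) p))
      (mul_le_mul_of_nonneg_left hsum hk)
      (le_of_lt (div_pos one_pos hpos))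

/-- Scaling property of the `p`-mean. -/
lemma pmean_smul {ι : Type*} (s : Finset ι) (k : ℝ) (hk : 0 ≤ k)
    {p : ℝ} (hp : p ≠ 0) (lam : ℝ) (hlam : 0 ≤ lam)
    (u : ι → ℝ) (hu : ∀ i ∈ s, 0 ≤ u i) :
    (k * ∑ i ∈ s, (lam * u i) ^ p) ^ (1/p) = lam * (k * ∑ i ∈ s, u i ^ p) ^ (1/p) := by
  have h1 : ∀ i ∈ s, (lam * u i) ^ p = lam ^ p * u i ^ p := fun i hi =>
    Real.mul_rpow hlam (hu i hi)
  rw [Finset.sum_congr rfl h1, ← Finset.mul_sum, mul_left_comm,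
    Real.mul_rpow (Real.rpow_nonneg hlam p)
      (mul_nonneg hk (Finset.sum_nonneg fun i hi => Real.rpow_nonneg (hu i hi) p)),
    ← Real.rpow_mul hlam, mul_one_div_cancel hp, Real.rpow_one]

set_option maxHeartbeats 2000000 in
/-- At every pure Nash equilibrium `b` of the Trading Post mechanism with proportional budgets
(for any nonnegative valuation matrix and any `p ≤ 1`, `p ≠ 0`),
`GMW_p(y^equal) ≤ (1 + max_c |I_c|/n) · GMW_p(ỹ)`, where `y^equal_{j,i} = 1/n` is the equal-split
allocation and `ỹ = tpAlloc b` is the equilibrium allocation. -/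
theorem tradingPost_equal_split_vs_equilibrium {m n C : ℕ}
    (hm : 0 < m) (hn : 0 < n) (hC : 0 < C)
    (A : Matrix (Fin m) (Fin n) ℝ) (hA0 : ∀ j i, 0 ≤ A j i)
    (p : ℝ) (hp1 : p ≤ 1) (hp0 : p ≠ 0)
    (ctr : Fin n → Fin C) (hsurj : ∀ c, ∃ i, ctr i = c)
    (b : Fin m → Fin n → ℝ)
    (heq : TPEquilibrium ctr (fun c y => GMWc p A ctr c y) b) :
    GMW p A (fun _ _ => 1 / (n : ℝ)) ≤
      (1 + ⨆ c : Fin C, ((Ic ctr c).card : ℝ) / n) * GMW p A (tpAlloc b) := by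
  obtain ⟨⟨hb0, hbud⟩, hnash⟩ := heq
  have hn' : (0:ℝ) < n := by exact_mod_cast hn
  have hm' : (0:ℝ) < m := by exact_mod_cast hm
  set v : Fin n → ℝ := fun i => ∑ j, A j i with hv_def
  have hv0 : ∀ i, 0 ≤ v i := fun i => Finset.sum_nonneg fun j _ => hA0 j i
  set f : Fin n → ℝ := fun i => util A (tpAlloc b) i with hf_def
  -- basic bounds on the equilibrium allocation
  have hy01 : ∀ j i, 0 ≤ tpAlloc b j i ∧ tpAlloc b j i ≤ 1 := by
    intro j i
    unfold tpAlloc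
    by_cases hS : (∑ i', b j i') = 0
    · simp [hS]
    · have hSnn : 0 ≤ ∑ i', b j i' := Finset.sum_nonneg fun i' _ => hb0 j i'
      have hSpos : 0 < ∑ i', b j i' := lt_of_le_of_ne hSnn (Ne.symm hS)
      rw [if_neg hS]
      constructor
      · exact div_nonneg (hb0 j i) hSnn
      · rw [div_le_one hSpos]
        exact Finset.single_le_sum (fun i' _ => hb0 j i') (Finset.mem_univ i)
  have hf0 : ∀ i, 0 ≤ f i :=
    fun i => Finset.sum_nonneg fun j _ => mul_nonneg (hA0 j i) (hy01 j i).1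
  have hfv : ∀ i, f i ≤ v i := by
    intro i
    apply Finset.sum_le_sum
    intro j _
    calc A j i * tpAlloc b j i ≤ A j i * 1 :=
          mul_le_mul_of_nonneg_left (hy01 j i).2 (hA0 j i)
      _ = A j i := mul_one _
  have hIcpos : ∀ c, 0 < ((Ic ctr c).card : ℝ) := by
    intro c
    obtain ⟨i, hi⟩ := hsurj c
    have : i ∈ Ic ctr c := by simp [Ic, hi]
    have := Finset.card_pos.mpr ⟨i, this⟩
    exact_mod_cast this
  have hfib : ∀ (F : Fin n → ℝ), ∑ c, ∑ i ∈ Ic ctr c, F i = ∑ i, F i := by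
    intro F
    exact Finset.sum_fiberwise Finset.univ ctr F
  have hIcle : ∀ c, ((Ic ctr c).card : ℝ) ≤ n := by
    intro c
    have : (Ic ctr c).card ≤ n := by
      simpa using Finset.card_le_univ (Ic ctr c)
    exact_mod_cast this
  have hncard : ∑ c, ((Ic ctr c).card : ℝ) = n := by
    have := hfib (fun _ => (1:ℝ))
    simpa [Finset.sum_const] using this
  -- nonnegativity of GMWc values
  have hG0 : ∀ c, 0 ≤ GMWc p A ctr c (tpAlloc b) := by
    intro c
    apply Real.rpow_nonneg
    apply mul_nonneg (by positivity)
    exact Finset.sum_nonneg fun i _ => Real.rpow_nonneg (hf0 i) p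
  -- THE KEY PER-CENTER INEQUALITY
  have hkey : ∀ c : Fin C,
      ((1 / ((Ic ctr c).card : ℝ)) * ∑ i ∈ Ic ctr c, v i ^ p) ^ (1/p) ≤
        (n : ℝ) * GMWc p A ctr c (tpAlloc b) := by
    intro c
    have hncpos := hIcpos c
    have hncle := hIcle c
    have hcard_pos : 0 < (Ic ctr c).card := by exact_mod_cast hncpos
    have hnc1 : (1:ℝ) ≤ ((Ic ctr c).card : ℝ) := by exact_mod_cast hcard_pos
    set G := GMWc p A ctr c (tpAlloc b) with hG_def
    have hG : 0 ≤ G := hG0 c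
    set M := ((1 / ((Ic ctr c).card:ℝ)) * ∑ i ∈ Ic ctr c, v i ^ p) ^ (1/p) with hM_def
    have hM0 : 0 ≤ M :=
      Real.rpow_nonneg (mul_nonneg (by positivity)
        (Finset.sum_nonneg fun i _ => Real.rpow_nonneg (hv0 i) p)) _
    -- Step A: for every δ > 0 the center can secure a 1/(n+mδ) fraction of everything
    have hdelta : ∀ δ : ℝ, 0 < δ → M ≤ ((n:ℝ) + m * δ) * G := by
      intro δ hδ
      haveI : Nonempty (Fin m) := ⟨⟨0, hm⟩⟩
      set s : Fin m → ℝ := fun j => ∑ i ∈ Finset.univ \ Ic ctr c, b j i with hs_def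
      have hs0 : ∀ j, 0 ≤ s j := fun j => Finset.sum_nonneg fun i _ => hb0 j i
      set K : ℝ := ∑ j, (s j + δ) with hK_def
      have hK0 : 0 < K :=
        Finset.sum_pos (fun j _ => by linarith [hs0 j]) Finset.univ_nonempty
      have hKle : K ≤ (n:ℝ) - ((Ic ctr c).card:ℝ) + m * δ := by
        have hsplit : K = (∑ j, s j) + m * δ := by
          rw [hK_def, Finset.sum_add_distrib, Finset.sum_const, Finset.card_univ,
            Fintype.card_fin, nsmul_eq_mul]
        have hswap : ∑ j, s j = ∑ i ∈ Finset.univ \ Ic ctr c, ∑ j, b j i :=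
          Finset.sum_comm
        have houter : ∑ i ∈ Finset.univ \ Ic ctr c, ∑ j, b j i
            ≤ (n:ℝ) - ((Ic ctr c).card:ℝ) := by
          have h1 : ∀ c', ∑ i ∈ Ic ctr c', ∑ j, b j i ≤ ((Ic ctr c').card : ℝ) := by
            intro c'
            calc ∑ i ∈ Ic ctr c', ∑ j, b j i
                = ∑ j, ∑ i ∈ Ic ctr c', b j i := Finset.sum_comm
              _ ≤ _ := hbud c'
          have h2 : (∑ i ∈ Finset.univ \ Ic ctr c, ∑ j, b j i)
              + ∑ i ∈ Ic ctr c, ∑ j, b j i = ∑ i, ∑ j, b j i :=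
            Finset.sum_sdiff (Finset.subset_univ _)
          have h3 : ∑ c', ∑ i ∈ Ic ctr c', ∑ j, b j i = ∑ i, ∑ j, b j i :=
            hfib _
          have h4 : (∑ c' ∈ Finset.univ.erase c, ∑ i ∈ Ic ctr c', ∑ j, b j i)
              + ∑ i ∈ Ic ctr c, ∑ j, b j i = ∑ c', ∑ i ∈ Ic ctr c', ∑ j, b j i :=
            Finset.sum_erase_add _ _ (Finset.mem_univ c)
          have h6 : ∑ c' ∈ Finset.univ.erase c, ∑ i ∈ Ic ctr c', ∑ j, b j i
              ≤ ∑ c' ∈ Finset.univ.erase c, ((Ic ctr c').card:ℝ) :=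
            Finset.sum_le_sum fun c' _ => h1 c'
          have h7 : (∑ c' ∈ Finset.univ.erase c, ((Ic ctr c').card:ℝ))
              + ((Ic ctr c).card:ℝ) = (n:ℝ) := by
            rw [Finset.sum_erase_add _ _ (Finset.mem_univ c)]
            exact hncard
          linarith
        linarith [hswap ▸ houter, hsplit]
      set β : Fin m → ℝ := fun j => (s j + δ) / K with hβ_def
      have hβpos : ∀ j, 0 < β j := fun j => div_pos (by linarith [hs0 j]) hK0
      have hβsum : ∑ j, β j = 1 := by
        rw [hβ_def, ← Finset.sum_div, ← hK_def, div_self (ne_of_gt hK0)]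
      set b' : Fin m → Fin n → ℝ := fun j i => if ctr i = c then β j else b j i with hb'_def
      have hvalid' : TPValid ctr b' := by
        constructor
        · intro j i
          by_cases h : ctr i = c
          · simpa [hb'_def, h] using (hβpos j).le
          · simpa [hb'_def, h] using hb0 j i
        · intro c'
          by_cases hc : c' = c
          · subst hc
            have hrow : ∀ j, ∑ i ∈ Ic ctr c', b' j i = ((Ic ctr c').card : ℝ) * β j := by
              intro j
              rw [Finset.sum_congr rfl
                (fun i hi => show b' j i = β j by
                  simp [hb'_def, (Finset.mem_filter.1 hi).2]),
                Finset.sum_const, nsmul_eq_mul]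
            rw [Finset.sum_congr rfl fun j _ => hrow j, ← Finset.mul_sum, hβsum, mul_one]
          · have hrow : ∀ j, ∑ i ∈ Ic ctr c', b' j i = ∑ i ∈ Ic ctr c', b j i := by
              intro j
              apply Finset.sum_congr rfl
              intro i hi
              have h' : ctr i = c' := (Finset.mem_filter.1 hi).2
              simp [hb'_def, h', hc]
            rw [Finset.sum_congr rfl fun j _ => hrow j]
            exact hbud c'
      have hoff : ∀ j i, ctr i ≠ c → b' j i = b j i := by
        intro j i h
        simp [hb'_def, h]
      have hD : ∀ j, ∑ i', b' j i' = ((Ic ctr c).card:ℝ) * β j + s j := by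
        intro j
        have hsplit : (∑ i' ∈ Finset.univ \ Ic ctr c, b' j i')
            + ∑ i' ∈ Ic ctr c, b' j i' = ∑ i', b' j i' :=
          Finset.sum_sdiff (Finset.subset_univ _)
        have h1 : ∑ i' ∈ Ic ctr c, b' j i' = ((Ic ctr c).card:ℝ) * β j := by
          rw [Finset.sum_congr rfl
            (fun i hi => show b' j i = β j by
              simp [hb'_def, (Finset.mem_filter.1 hi).2]),
            Finset.sum_const, nsmul_eq_mul]
        have h2 : ∑ i' ∈ Finset.univ \ Ic ctr c, b' j i' = s j := by
          apply Finset.sum_congr rfl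
          intro i hi
          have hic : ctr i ≠ c := by
            have := (Finset.mem_sdiff.1 hi).2
            simpa [Ic] using this
          simp [hb'_def, hic]
        linarith
      have hDpos : ∀ j, 0 < ((Ic ctr c).card:ℝ) * β j + s j := by
        intro j
        nlinarith [hβpos j, hs0 j]
      have halloc : ∀ j, ∀ i ∈ Ic ctr c,
          tpAlloc b' j i = β j / (((Ic ctr c).card:ℝ) * β j + s j) := by
        intro j i hi
        unfold tpAlloc
        rw [hD j, if_neg (ne_of_gt (hDpos j))]
        congr 1
        simp [hb'_def, (Finset.mem_filter.1 hi).2]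
      have hN : (0:ℝ) < (n:ℝ) + m * δ := by positivity
      have hfrac_low : ∀ j,
          1 / ((n:ℝ) + m * δ) ≤ β j / (((Ic ctr c).card:ℝ) * β j + s j) := by
        intro j
        rw [div_le_div_iff₀ hN (hDpos j), one_mul]
        have key : ((Ic ctr c).card:ℝ) * (s j + δ) + K * s j
            ≤ (s j + δ) * ((n:ℝ) + m * δ) := by
          have h1 : 0 ≤ ((n:ℝ) - ((Ic ctr c).card:ℝ) + m*δ - K) * s j :=
            mul_nonneg (by linarith) (hs0 j)
          have h2 : 0 ≤ ((n:ℝ) - ((Ic ctr c).card:ℝ) + m*δ) * δ :=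
            mul_nonneg (by nlinarith) hδ.le
          nlinarith [h1, h2]
        have hlhs : ((Ic ctr c).card:ℝ) * β j + s j
            = (((Ic ctr c).card:ℝ) * (s j + δ) + K * s j) / K := by
          rw [hβ_def]
          field_simp
        rw [hlhs, hβ_def]
        show (((Ic ctr c).card:ℝ) * (s j + δ) + K * s j) / K
            ≤ (s j + δ) / K * ((n:ℝ) + m * δ)
        rw [div_mul_eq_mul_div]
        exact (div_le_div_iff_of_pos_right hK0).2 key
      have hfrac_up : ∀ j, β j / (((Ic ctr c).card:ℝ) * β j + s j) ≤ 1 := by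
        intro j
        rw [div_le_one (hDpos j)]
        nlinarith [mul_nonneg (sub_nonneg.2 hnc1) (hβpos j).le, hs0 j]
      have hw_le : ∀ i ∈ Ic ctr c,
          (1/((n:ℝ) + m * δ)) * v i ≤ util A (tpAlloc b') i := by
        intro i hi
        have hrw : (1/((n:ℝ) + m * δ)) * v i = ∑ j, A j i * (1/((n:ℝ) + m * δ)) := by
          rw [mul_comm, hv_def]
          exact Finset.sum_mul _ _ _
        rw [hrw]
        unfold util
        apply Finset.sum_le_sum
        intro j _
        rw [halloc j i hi]
        exact mul_le_mul_of_nonneg_left (hfrac_low j) (hA0 j i)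
      have hu_le : ∀ i ∈ Ic ctr c, util A (tpAlloc b') i ≤ v i := by
        intro i hi
        unfold util
        rw [hv_def]
        apply Finset.sum_le_sum
        intro j _
        rw [halloc j i hi]
        calc A j i * (β j / (((Ic ctr c).card:ℝ) * β j + s j)) ≤ A j i * 1 :=
              mul_le_mul_of_nonneg_left (hfrac_up j) (hA0 j i)
          _ = A j i := mul_one _
      have hw0 : ∀ i ∈ Ic ctr c, 0 ≤ (1/((n:ℝ) + m * δ)) * v i :=
        fun i _ => mul_nonneg (one_div_nonneg.2 hN.le) (hv0 i)
      have hu0 : ∀ i ∈ Ic ctr c, 0 ≤ util A (tpAlloc b') i :=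
        fun i hi => le_trans (hw0 i hi) (hw_le i hi)
      have hmono := pmean_mono (Ic ctr c) (1/((Ic ctr c).card:ℝ))
        (one_div_nonneg.2 hncpos.le) hp0
        (fun i => (1/((n:ℝ) + m * δ)) * v i) (fun i => util A (tpAlloc b') i)
        hw0 hw_le
        (fun i hi hu => le_antisymm (hu ▸ hw_le i hi) (hw0 i hi))
        (fun i hi hw => by
          have hvz : v i = 0 := by
            rcases mul_eq_zero.1 hw with h | h
            · exact absurd h (ne_of_gt (one_div_pos.2 hN))
            · exact h
          exact le_antisymm (hvz ▸ hu_le i hi) (hu0 i hi))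
      have hsmul := pmean_smul (Ic ctr c) (1/((Ic ctr c).card:ℝ))
        (one_div_nonneg.2 hncpos.le) hp0
        (1/((n:ℝ) + m * δ)) (one_div_nonneg.2 hN.le) v (fun i _ => hv0 i)
      have hdev := hnash c b' hvalid' hoff
      have hcomb : (1/((n:ℝ) + m * δ)) * M ≤ G := by
        calc (1/((n:ℝ) + m * δ)) * M
            = ((1/((Ic ctr c).card:ℝ)) *
                ∑ i ∈ Ic ctr c, ((1/((n:ℝ) + m * δ)) * v i) ^ p) ^ (1/p) := by
              rw [hM_def, ← hsmul]
          _ ≤ ((1/((Ic ctr c).card:ℝ)) *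
                ∑ i ∈ Ic ctr c, (util A (tpAlloc b') i) ^ p) ^ (1/p) := hmono
          _ = GMWc p A ctr c (tpAlloc b') := rfl
          _ ≤ G := hdev
      rw [one_div, inv_mul_le_iff₀ hN] at hcomb
      exact hcomb
    -- Step B: let δ → 0
    have hMle : M ≤ (n:ℝ) * G := by
      apply le_of_forall_pos_le_add
      intro ε hε
      rcases eq_or_lt_of_le hG with hGz | hGpos
      · have h := hdelta 1 one_pos
        rw [← hGz, mul_zero] at h
        nlinarith [h]
      · have hδp : 0 < ε / ((m:ℝ) * G) := div_pos hε (by positivity)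
        have h := hdelta _ hδp
        have hEq : ((n:ℝ) + m * (ε / (m * G))) * G = (n:ℝ) * G + ε := by
          field_simp
        linarith [hEq ▸ h]
    exact hMle
  -- GLOBAL ASSEMBLY
  set g : Fin n → ℝ := fun i => v i / n with hg_def
  have hg0 : ∀ i, 0 ≤ g i := fun i => div_nonneg (hv0 i) hn'.le
  have hgz : ∀ i, g i = 0 → f i = 0 := by
    intro i h
    have hvz : v i = 0 := by
      have : v i / (n:ℝ) = 0 := h
      field_simp at this
      simpa using this
    exact le_antisymm (hvz ▸ hfv i) (hf0 i)
  have hrppow : ∀ X : ℝ, 0 ≤ X → (X ^ (1/p)) ^ p = X := by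
    intro X hX
    rw [← Real.rpow_mul hX, one_div_mul_cancel hp0, Real.rpow_one]
  -- per-center pmean inequality
  have hPQ : ∀ c, ((1 / ((Ic ctr c).card:ℝ)) * ∑ i ∈ Ic ctr c, g i ^ p) ^ (1/p) ≤
      ((1 / ((Ic ctr c).card:ℝ)) * ∑ i ∈ Ic ctr c, f i ^ p) ^ (1/p) := by
    intro c
    have hgeq : ∀ i ∈ Ic ctr c, g i ^ p = ((1/(n:ℝ)) * v i) ^ p := by
      intro i _
      rw [hg_def]
      congr 1
      rw [one_div, inv_mul_eq_div]
    have hQ : ((1 / ((Ic ctr c).card:ℝ)) * ∑ i ∈ Ic ctr c, f i ^ p) ^ (1/p) =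
        GMWc p A ctr c (tpAlloc b) := rfl
    calc ((1 / ((Ic ctr c).card:ℝ)) * ∑ i ∈ Ic ctr c, g i ^ p) ^ (1/p)
        = ((1 / ((Ic ctr c).card:ℝ)) * ∑ i ∈ Ic ctr c, ((1/(n:ℝ)) * v i) ^ p) ^ (1/p) := by
          rw [Finset.sum_congr rfl hgeq]
      _ = (1/(n:ℝ)) *
            ((1 / ((Ic ctr c).card:ℝ)) * ∑ i ∈ Ic ctr c, v i ^ p) ^ (1/p) :=
          pmean_smul _ _ (by positivity) hp0 _ (by positivity) _ (fun i _ => hv0 i)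
      _ ≤ GMWc p A ctr c (tpAlloc b) := by
          have h := hkey c
          rw [one_div, inv_mul_le_iff₀ hn']
          linarith [h]
      _ = _ := hQ.symm
  have hsum_g_nonneg : ∀ (s : Finset (Fin n)), 0 ≤ ∑ i ∈ s, g i ^ p :=
    fun s => Finset.sum_nonneg fun i _ => Real.rpow_nonneg (hg0 i) p
  have hsum_f_nonneg : ∀ (s : Finset (Fin n)), 0 ≤ ∑ i ∈ s, f i ^ p :=
    fun s => Finset.sum_nonneg fun i _ => Real.rpow_nonneg (hf0 i) p
  -- rewrite GMW of the equal split in terms of g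
  have hueq : ∀ i, util A (fun _ _ => 1/(n:ℝ)) i = g i := by
    intro i
    show ∑ j, A j i * (1/(n:ℝ)) = (∑ j, A j i) / n
    rw [Finset.sum_div]
    exact Finset.sum_congr rfl fun j _ => mul_one_div _ _
  have hGMWeq : GMW p A (fun _ _ => 1/(n:ℝ)) = ((1/(n:ℝ)) * ∑ i, g i ^ p) ^ (1/p) := by
    unfold GMW
    congr 2
    exact Finset.sum_congr rfl fun i _ => by rw [hueq i]
  have hGMWf : GMW p A (tpAlloc b) = ((1/(n:ℝ)) * ∑ i, f i ^ p) ^ (1/p) := rfl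
  have hsup0 : (0:ℝ) ≤ ⨆ c : Fin C, ((Ic ctr c).card : ℝ) / n := by
    have hne : Nonempty (Fin C) := ⟨⟨0, hC⟩⟩
    have hbdd : BddAbove (Set.range fun c => ((Ic ctr c).card:ℝ)/n) :=
      Set.Finite.bddAbove (Set.finite_range _)
    calc (0:ℝ) ≤ ((Ic ctr ⟨0,hC⟩).card:ℝ)/n := by positivity
      _ ≤ _ := le_ciSup hbdd _
  have hmain : ((1/(n:ℝ)) * ∑ i, g i ^ p) ^ (1/p) ≤ ((1/(n:ℝ)) * ∑ i, f i ^ p) ^ (1/p) := by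
    have hgb : ∀ c, (0:ℝ) ≤ (1/((Ic ctr c).card:ℝ)) * ∑ i ∈ Ic ctr c, g i ^ p :=
      fun c => mul_nonneg (by positivity) (hsum_g_nonneg _)
    have hfb : ∀ c, (0:ℝ) ≤ (1/((Ic ctr c).card:ℝ)) * ∑ i ∈ Ic ctr c, f i ^ p :=
      fun c => mul_nonneg (by positivity) (hsum_f_nonneg _)
    rcases lt_or_gt_of_ne hp0 with hpneg | hppos
    · -- p < 0
      have hS : ∀ c, ∑ i ∈ Ic ctr c, f i ^ p ≤ ∑ i ∈ Ic ctr c, g i ^ p := by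
        intro c
        have hncpos := hIcpos c
        have hP0 : (0:ℝ) ≤ ((1/((Ic ctr c).card:ℝ)) * ∑ i ∈ Ic ctr c, g i ^ p) ^ (1/p) :=
          Real.rpow_nonneg (hgb c) _
        rcases eq_or_lt_of_le hP0 with hPz | hPpos
        · -- the g-pmean is zero : everything vanishes on the center
          have hbase : (1/((Ic ctr c).card:ℝ)) * ∑ i ∈ Ic ctr c, g i ^ p = 0 :=
            (Real.rpow_eq_zero (hgb c) (one_div_ne_zero hp0)).1 hPz.symm
          have hsg : ∑ i ∈ Ic ctr c, g i ^ p = 0 := by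
            rcases mul_eq_zero.1 hbase with h | h
            · exact absurd h (one_div_ne_zero hncpos.ne')
            · exact h
          have hall : ∀ i ∈ Ic ctr c, g i ^ p = 0 :=
            (Finset.sum_eq_zero_iff_of_nonneg
              (fun i _ => Real.rpow_nonneg (hg0 i) p)).1 hsg
          have hsf : ∑ i ∈ Ic ctr c, f i ^ p = 0 := by
            apply Finset.sum_eq_zero
            intro i hi
            have hgi : g i = 0 := (Real.rpow_eq_zero (hg0 i) hp0).1 (hall i hi)
            rw [hgz i hgi, Real.zero_rpow hp0]
          rw [hsf, hsg]
        · -- the g-pmean is positive : raise hPQ to the power p (antitone)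
          have h := Real.rpow_le_rpow_of_nonpos hPpos (hPQ c) hpneg.le
          rw [hrppow _ (hgb c), hrppow _ (hfb c)] at h
          exact (mul_le_mul_iff_right₀ (by positivity : (0:ℝ) < 1/((Ic ctr c).card:ℝ))).1 h
      have htot : ∑ i, f i ^ p ≤ ∑ i, g i ^ p := by
        rw [← hfib (fun i => f i ^ p), ← hfib (fun i => g i ^ p)]
        exact Finset.sum_le_sum fun c _ => hS c
      have ha0 : (0:ℝ) ≤ (1/(n:ℝ)) * ∑ i, f i ^ p :=
        mul_nonneg (by positivity) (hsum_f_nonneg _)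
      rcases eq_or_lt_of_le ha0 with haz | hapos
      · -- all equilibrium utilities vanish; then so do all equal-split ones
        have hsf : ∑ i, f i ^ p = 0 := by
          rcases mul_eq_zero.1 haz.symm with h | h
          · exact absurd h (by positivity)
          · exact h
        have hallf : ∀ i, f i ^ p = 0 := by
          intro i
          exact (Finset.sum_eq_zero_iff_of_nonneg
            (fun i _ => Real.rpow_nonneg (hf0 i) p)).1 hsf i (Finset.mem_univ i)
        have hsgz : ∀ c, ∑ i ∈ Ic ctr c, g i ^ p = 0 := by
          intro c
          have hncpos := hIcpos c
          have hQz : ((1/((Ic ctr c).card:ℝ)) * ∑ i ∈ Ic ctr c, f i ^ p) ^ (1/p) = 0 := by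
            have : ∑ i ∈ Ic ctr c, f i ^ p = 0 :=
              Finset.sum_eq_zero fun i _ => hallf i
            rw [this, mul_zero, Real.zero_rpow (one_div_ne_zero hp0)]
          have hPz : ((1/((Ic ctr c).card:ℝ)) * ∑ i ∈ Ic ctr c, g i ^ p) ^ (1/p) = 0 :=
            le_antisymm (hQz ▸ hPQ c) (Real.rpow_nonneg (hgb c) _)
          have hbase : (1/((Ic ctr c).card:ℝ)) * ∑ i ∈ Ic ctr c, g i ^ p = 0 :=
            (Real.rpow_eq_zero (hgb c) (one_div_ne_zero hp0)).1 hPz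
          rcases mul_eq_zero.1 hbase with h | h
          · exact absurd h (one_div_ne_zero hncpos.ne')
          · exact h
        have hsg : ∑ i, g i ^ p = 0 := by
          rw [← hfib (fun i => g i ^ p)]
          exact Finset.sum_eq_zero fun c _ => hsgz c
        rw [hsg, ← haz, mul_zero, Real.zero_rpow (one_div_ne_zero hp0)]
      · exact Real.rpow_le_rpow_of_nonpos hapos
          (mul_le_mul_of_nonneg_left htot (by positivity))
          (le_of_lt (div_neg_of_pos_of_neg one_pos hpneg))
    · -- p > 0
      have hS : ∀ c, ∑ i ∈ Ic ctr c, g i ^ p ≤ ∑ i ∈ Ic ctr c, f i ^ p := by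
        intro c
        have hncpos := hIcpos c
        have h := Real.rpow_le_rpow (Real.rpow_nonneg (hgb c) _) (hPQ c) hppos.le
        rw [hrppow _ (hgb c), hrppow _ (hfb c)] at h
        exact (mul_le_mul_iff_right₀ (by positivity : (0:ℝ) < 1/((Ic ctr c).card:ℝ))).1 h
      have htot : ∑ i, g i ^ p ≤ ∑ i, f i ^ p := by
        rw [← hfib (fun i => f i ^ p), ← hfib (fun i => g i ^ p)]
        exact Finset.sum_le_sum fun c _ => hS c
      exact Real.rpow_le_rpow (mul_nonneg (by positivity) (hsum_g_nonneg _))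
        (mul_le_mul_of_nonneg_left htot (by positivity)) (le_of_lt (by positivity))
  rw [hGMWeq, hGMWf]
  calc ((1/(n:ℝ)) * ∑ i, g i ^ p) ^ (1/p)
      ≤ ((1/(n:ℝ)) * ∑ i, f i ^ p) ^ (1/p) := hmain
    _ ≤ (1 + ⨆ c : Fin C, ((Ic ctr c).card : ℝ) / n) *
          ((1/(n:ℝ)) * ∑ i, f i ^ p) ^ (1/p) := by
        apply le_mul_of_one_le_left
          (Real.rpow_nonneg (mul_nonneg (by positivity) (hsum_f_nonneg _)) _)
        linarith
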